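/- Let A be a 2×2 matrix of linear forms over R = K[x_0,…,x_r] (char K ≠ 2) whose first column entries a_{11}, a_{21} are linearly independent, and suppose det(A) = u·v for linear forms u, v with a_{11}, a_{21}, u linearly independent. Then there exist constants x_1, x_2, x_3 ∈ K such that, after replacing the second column C_2 by C_2 - x_3·C_1, the second column of A equals (-x_1·u, x_2·u)ᵀ; in particular its two entries are K-linearly dependent. -/

import Mathlib

open MvPolynomial

section Aux

variable {K : Type*} [Field K] {r : ℕ}

lemma degree_one_single {n : ℕ} (m : Fin n →₀ ℕ) (h : Finsupp.degree m = 1) :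
    ∃ i, m = Finsupp.single i 1 := by
  have hne : m.support.Nonempty := by
    by_contra hc
    rw [Finset.not_nonempty_iff_eq_empty] at hc
    simp [Finsupp.degree_apply, hc] at h
  obtain ⟨i, hi⟩ := hne
  have hle : m i ≤ 1 := by
    calc m i ≤ ∑ j ∈ m.support, m j := Finset.single_le_sum (fun _ _ => Nat.zero_le _) hi
    _ = 1 := h
  have hne0 : m i ≠ 0 := Finsupp.mem_support_iff.mp hi
  have hmi : m i = 1 := le_antisymm hle (Nat.one_le_iff_ne_zero.mpr hne0)
  have hsum : ∑ j ∈ m.support, m j = 1 := h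
  have hrest : ∑ j ∈ m.support.erase i, m j = 0 := by
    have := Finset.add_sum_erase _ m hi
    omega
  refine ⟨i, ?_⟩
  ext j
  rcases eq_or_ne j i with rfl | hji
  · simp [hmi]
  · have : m j = 0 := by
      by_contra hc
      have hj : j ∈ m.support.erase i := Finset.mem_erase.mpr ⟨hji, Finsupp.mem_support_iff.mpr hc⟩
      have := Finset.single_le_sum (f := m) (fun _ _ => Nat.zero_le _) hj
      omega
    simp [this, Finsupp.single_apply, (Ne.symm hji : i ≠ j)]


lemma repr_one (p : MvPolynomial (Fin (r + 1)) K) (hp : p.IsHomogeneous 1) :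
    p = ∑ i : Fin (r + 1), C (coeff (Finsupp.single i 1) p) * X i := by
  ext m
  rw [MvPolynomial.coeff_sum]
  by_cases hm : Finsupp.degree m = 1
  · obtain ⟨i, rfl⟩ := degree_one_single m hm
    rw [Finset.sum_eq_single i]
    · simp [coeff_C_mul, coeff_X']
    · intro j _ hji
      have : ¬ (Finsupp.single j 1 = Finsupp.single i (1:ℕ)) := by
        simp [Finsupp.single_eq_single_iff, hji]
      simp [coeff_C_mul, coeff_X', this]
    · intro h; exact absurd (Finset.mem_univ i) h
  · rw [hp.coeff_eq_zero hm]
    refine (Finset.sum_eq_zero fun j _ => ?_).symm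
    have : ¬ (Finsupp.single j (1:ℕ) = m) := by
      intro hc
      apply hm
      rw [← hc, Finsupp.degree_apply, Finsupp.support_single_ne_zero _ one_ne_zero,
        Finset.sum_singleton, Finsupp.single_eq_same]
    simp [coeff_C_mul, coeff_X', this]

/-- The linear functional on linear forms determined by a coefficient vector. -/
noncomputable def gfun (c : Fin (r + 1) → K) (p : MvPolynomial (Fin (r + 1)) K) : K :=
  ∑ i : Fin (r + 1), c i * coeff (Finsupp.single i 1) p

lemma gfun_add (c : Fin (r + 1) → K) (p q : MvPolynomial (Fin (r + 1)) K) :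
    gfun c (p + q) = gfun c p + gfun c q := by
  simp [gfun, coeff_add, mul_add, Finset.sum_add_distrib]

lemma gfun_sub (c : Fin (r + 1) → K) (p q : MvPolynomial (Fin (r + 1)) K) :
    gfun c (p - q) = gfun c p - gfun c q := by
  simp [gfun, coeff_sub, mul_sub, Finset.sum_sub_distrib]

lemma gfun_C_mul (c : Fin (r + 1) → K) (t : K) (p : MvPolynomial (Fin (r + 1)) K) :
    gfun c (C t * p) = t * gfun c p := by
  simp only [gfun, coeff_C_mul, Finset.mul_sum]
  exact Finset.sum_congr rfl fun i _ => by ring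

/-- Directional derivative. -/
noncomputable def Dc (c : Fin (r + 1) → K) (p : MvPolynomial (Fin (r + 1)) K) :
    MvPolynomial (Fin (r + 1)) K :=
  ∑ i : Fin (r + 1), C (c i) * pderiv i p

lemma Dc_sub (c : Fin (r + 1) → K) (p q : MvPolynomial (Fin (r + 1)) K) :
    Dc c (p - q) = Dc c p - Dc c q := by
  simp [Dc, map_sub, mul_sub, Finset.sum_sub_distrib]

lemma Dc_mul (c : Fin (r + 1) → K) (p q : MvPolynomial (Fin (r + 1)) K) :
    Dc c (p * q) = Dc c p * q + p * Dc c q := by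
  simp only [Dc, pderiv_mul, mul_add, Finset.sum_add_distrib, Finset.sum_mul, Finset.mul_sum]
  congr 1
  · exact Finset.sum_congr rfl fun i _ => by ring
  · exact Finset.sum_congr rfl fun i _ => by ring

lemma Dc_zero (c : Fin (r + 1) → K) : Dc c 0 = 0 := by simp [Dc]

lemma pderiv_linear (p : MvPolynomial (Fin (r + 1)) K) (hp : p.IsHomogeneous 1)
    (i : Fin (r + 1)) : pderiv i p = C (coeff (Finsupp.single i 1) p) := by
  conv_lhs => rw [repr_one p hp]
  rw [map_sum]
  rw [Finset.sum_eq_single i]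
  · simp [pderiv_C_mul]
  · intro j _ hji
    simp [pderiv_C_mul, pderiv_X_of_ne hji]
  · intro h; exact absurd (Finset.mem_univ i) h

lemma Dc_linear (c : Fin (r + 1) → K) (p : MvPolynomial (Fin (r + 1)) K)
    (hp : p.IsHomogeneous 1) : Dc c p = C (gfun c p) := by
  simp only [Dc, pderiv_linear p hp, gfun, map_sum, map_mul]

lemma gfun_eq_of_extend (F : MvPolynomial (Fin (r + 1)) K →ₗ[K] K)
    (p : MvPolynomial (Fin (r + 1)) K) (hp : p.IsHomogeneous 1) :
    gfun (fun i => F (X i)) p = F p := by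
  conv_rhs => rw [repr_one p hp]
  rw [map_sum, gfun]
  refine Finset.sum_congr rfl fun i _ => ?_
  rw [← smul_eq_C_mul, map_smul, smul_eq_mul, mul_comm]

lemma exists_dual (w : Fin 3 → MvPolynomial (Fin (r + 1)) K)
    (hli : LinearIndependent K w) (hw : ∀ k, (w k).IsHomogeneous 1) (j : Fin 3) :
    ∃ c : Fin (r + 1) → K, ∀ k, gfun c (w k) = if k = j then 1 else 0 := by
  set B := Module.Basis.span hli
  obtain ⟨F, hF⟩ := LinearMap.exists_extend (B.coord j)
  refine ⟨fun i => F (X i), fun k => ?_⟩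
  rw [gfun_eq_of_extend F (w k) (hw k)]
  have hmem : w k ∈ Submodule.span K (Set.range w) :=
    Submodule.subset_span (Set.mem_range_self k)
  have hBk : (⟨w k, hmem⟩ : Submodule.span K (Set.range w)) = B k :=
    (Module.Basis.span_apply hli k).symm
  have : F (w k) = (B.coord j) ⟨w k, hmem⟩ := by
    have := congrArg (fun f => f ⟨w k, hmem⟩) hF
    simpa using this
  rw [this, hBk, Module.Basis.coord_apply, Module.Basis.repr_self, Finsupp.single_apply]

end Aux

/-- Lemma on `2 × 2` matrices of linear forms (case `a₁₁, a₂₁, u` independent):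
if `det A = u·v` with `a₁₁, a₂₁, u` linearly independent linear forms, then after a column
operation `C₂ - x₃·C₁` the second column of `A` becomes `(-x₁·u, x₂·u)ᵀ` for constants
`x₁, x₂, x₃`. -/
theorem two_by_two_det_factors_column_dependent
    {K : Type*} [Field K] (h2 : (2 : K) ≠ 0) {r : ℕ}
    (a11 a12 a21 a22 u v : MvPolynomial (Fin (r + 1)) K)
    (h11 : a11.IsHomogeneous 1) (h12 : a12.IsHomogeneous 1)
    (h21 : a21.IsHomogeneous 1) (h22 : a22.IsHomogeneous 1)
    (hu : u.IsHomogeneous 1) (hv : v.IsHomogeneous 1)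
    (hind : ∀ c1 c2 c3 : K, c1 • a11 + c2 • a21 + c3 • u = 0 → c1 = 0 ∧ c2 = 0 ∧ c3 = 0)
    (hdet : a11 * a22 - a21 * a12 = u * v) :
    ∃ x1 x2 x3 : K,
      a12 - C x3 * a11 = -(C x1 * u) ∧ a22 - C x3 * a21 = C x2 * u := by
  classical
  set w : Fin 3 → MvPolynomial (Fin (r + 1)) K := ![a11, a21, u] with hw
  have hwh : ∀ k, (w k).IsHomogeneous 1 := by
    intro k; fin_cases k <;> simpa [hw] using by assumption
  have hli : LinearIndependent K w := by
    rw [Fintype.linearIndependent_iff]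
    intro g hg
    have hsum : g 0 • a11 + g 1 • a21 + g 2 • u = 0 := by
      simpa [hw, Fin.sum_univ_three] using hg
    obtain ⟨h0, h1, h2'⟩ := hind _ _ _ hsum
    intro i; fin_cases i <;> assumption
  obtain ⟨c1, hc1⟩ := exists_dual w hli hwh 0
  obtain ⟨c2, hc2⟩ := exists_dual w hli hwh 1
  have hc1a11 : gfun c1 a11 = 1 := by simpa [hw] using hc1 0
  have hc1a21 : gfun c1 a21 = 0 := by simpa [hw] using hc1 1
  have hc1u : gfun c1 u = 0 := by simpa [hw] using hc1 2
  have hc2a11 : gfun c2 a11 = 0 := by simpa [hw] using hc2 0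
  have hc2a21 : gfun c2 a21 = 1 := by simpa [hw] using hc2 1
  have hc2u : gfun c2 u = 0 := by simpa [hw] using hc2 2
  have hP : a11 * a22 - a21 * a12 - u * v = 0 := by rw [hdet]; ring
  have key : ∀ c : Fin (r + 1) → K,
      C (gfun c a11) * a22 + a11 * C (gfun c a22)
        - (C (gfun c a21) * a12 + a21 * C (gfun c a12))
        - (C (gfun c u) * v + u * C (gfun c v)) = 0 := by
    intro c
    have h := congrArg (Dc c) hP
    rw [Dc_sub, Dc_sub, Dc_mul, Dc_mul, Dc_mul, Dc_zero,
      Dc_linear c a11 h11, Dc_linear c a12 h12, Dc_linear c a21 h21,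
      Dc_linear c a22 h22, Dc_linear c u hu, Dc_linear c v hv] at h
    exact h
  -- first functional
  have E1 := key c1
  rw [hc1a11, hc1a21, hc1u, map_one, map_zero] at E1
  have hα : gfun c1 a22 = 0 := by
    have e1 : a22 = C (gfun c1 a12) * a21 + C (gfun c1 v) * u - C (gfun c1 a22) * a11 := by
      linear_combination E1
    have h := congrArg (gfun c1) e1
    rw [gfun_sub, gfun_add, gfun_C_mul, gfun_C_mul, gfun_C_mul,
      hc1a11, hc1a21, hc1u] at h
    have h2' : 2 * gfun c1 a22 = 0 := by linear_combination h
    exact (mul_eq_zero.mp h2').resolve_left h2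
  have e1 : a22 = C (gfun c1 a12) * a21 + C (gfun c1 v) * u := by
    rw [hα, map_zero] at E1
    linear_combination E1
  -- second functional
  have E2 := key c2
  rw [hc2a11, hc2a21, hc2u, map_one, map_zero] at E2
  have hβ : gfun c2 a12 = 0 := by
    have e2 : a12 = C (gfun c2 a22) * a11 - C (gfun c2 a12) * a21 - C (gfun c2 v) * u := by
      linear_combination -E2
    have h := congrArg (gfun c2) e2
    rw [gfun_sub, gfun_sub, gfun_C_mul, gfun_C_mul, gfun_C_mul,
      hc2a11, hc2a21, hc2u] at h
    have h2' : 2 * gfun c2 a12 = 0 := by linear_combination h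
    exact (mul_eq_zero.mp h2').resolve_left h2
  have e2 : a12 = C (gfun c2 a22) * a11 - C (gfun c2 v) * u := by
    rw [hβ, map_zero] at E2
    linear_combination -E2
  -- matching of coefficients
  have hmatch : gfun c1 a12 = gfun c2 a22 := by
    have h := congrArg (gfun c1) e2
    rw [gfun_sub, gfun_C_mul, gfun_C_mul, hc1a11, hc1u] at h
    linear_combination h
  refine ⟨gfun c2 v, gfun c1 v, gfun c1 a12, ?_, ?_⟩
  · have hC : (C (gfun c1 a12) : MvPolynomial (Fin (r + 1)) K) = C (gfun c2 a22) := by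
      rw [hmatch]
    linear_combination e2 - a11 * hC
  · linear_combination e1
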